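/- Let d : ℕ, t > 0, and p ∈ MvPolynomial (Fin d) ℝ. Then the algebraically defined heat operator agrees with Gaussian convolution: for every x : Fin d → ℝ, ∫ MvPolynomial.eval (x + y) p dγ_t^d(y) = MvPolynomial.eval x (e^{tΔ/2} p). -/

import Mathlib

open MeasureTheory ProbabilityTheory MvPolynomial

/-- The product Gaussian measure `γ_r^d` of variance `r` on `Fin d → ℝ`. -/
noncomputable def gaussianPi (d : ℕ) (r : ℝ) : Measure (Fin d → ℝ) :=
  Measure.pi (fun _ : Fin d => gaussianReal 0 r.toNNReal)

/-- The Laplacian `Δ p = ∑ i, ∂²p/∂x_i²` on polynomials in `d` variables. -/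
noncomputable def mvLaplacian {d : ℕ} (p : MvPolynomial (Fin d) ℝ) :
    MvPolynomial (Fin d) ℝ :=
  ∑ i : Fin d, pderiv i (pderiv i p)

/-- The heat operator `e^{tΔ/2} p = ∑_{k ≤ totalDegree p} ((t/2)^k / k!) • Δ^k p`
(a terminating series, since `Δ` is locally nilpotent). -/
noncomputable def heatOp {d : ℕ} (t : ℝ) (p : MvPolynomial (Fin d) ℝ) :
    MvPolynomial (Fin d) ℝ :=
  ∑ k ∈ Finset.range (p.totalDegree + 1),
    ((t / 2) ^ k / (k.factorial : ℝ)) • (mvLaplacian (d := d))^[k] p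

namespace HeatAux

variable {d : ℕ}

lemma pderiv_comm (i j : Fin d) (p : MvPolynomial (Fin d) ℝ) :
    pderiv i (pderiv j p) = pderiv j (pderiv i p) := by
  induction p using MvPolynomial.induction_on' with
  | add p q hp hq => simp [map_add, hp, hq]
  | monomial s a =>
    rcases eq_or_ne i j with rfl | hij
    · rfl
    · simp only [pderiv_monomial]
      rw [Finsupp.tsub_apply, Finsupp.tsub_apply, Finsupp.single_apply, Finsupp.single_apply,
        if_neg hij, if_neg (Ne.symm hij)]
      rw [tsub_tsub, tsub_tsub, add_comm]
      congr 1
      simp only [Nat.sub_zero]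
      ring

lemma lap_add (p q : MvPolynomial (Fin d) ℝ) :
    mvLaplacian (p + q) = mvLaplacian p + mvLaplacian q := by
  simp [mvLaplacian, map_add, Finset.sum_add_distrib]

lemma lap_smul (c : ℝ) (p : MvPolynomial (Fin d) ℝ) :
    mvLaplacian (c • p) = c • mvLaplacian p := by
  simp only [mvLaplacian, Finset.smul_sum, (pderiv _).map_smul]

lemma lap_zero : mvLaplacian (0 : MvPolynomial (Fin d) ℝ) = 0 := by
  simp [mvLaplacian]

lemma lap_iter_add (k : ℕ) (p q : MvPolynomial (Fin d) ℝ) :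
    mvLaplacian^[k] (p + q) = mvLaplacian^[k] p + mvLaplacian^[k] q := by
  induction k generalizing p q with
  | zero => simp
  | succ k ih => simp [Function.iterate_succ_apply, lap_add, ih]

lemma lap_iter_smul (k : ℕ) (c : ℝ) (p : MvPolynomial (Fin d) ℝ) :
    mvLaplacian^[k] (c • p) = c • mvLaplacian^[k] p := by
  induction k generalizing p with
  | zero => simp
  | succ k ih => simp [Function.iterate_succ_apply, lap_smul, ih]

lemma lap_iter_zero (k : ℕ) : mvLaplacian^[k] (0 : MvPolynomial (Fin d) ℝ) = 0 := by
  induction k with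
  | zero => simp
  | succ k ih => simp [Function.iterate_succ_apply, lap_zero, ih]

lemma totalDegree_pderiv_le (i : Fin d) (p : MvPolynomial (Fin d) ℝ) (m : ℕ)
    (h : p.totalDegree ≤ m + 1) : (pderiv i p).totalDegree ≤ m := by
  conv_lhs => rw [p.as_sum]
  rw [map_sum]
  refine (totalDegree_finset_sum _ _).trans (Finset.sup_le fun v hv => ?_)
  rw [pderiv_monomial]
  rcases Nat.eq_zero_or_pos (v i) with h0 | h0
  · simp [h0]
  · refine (totalDegree_monomial_le _ _).trans ?_
    have hle : Finsupp.single i 1 ≤ v := by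
      rw [Finsupp.single_le_iff]; exact h0
    have hv' : (v - Finsupp.single i 1).sum (fun _ ↦ id) + 1 = v.sum (fun _ ↦ id) := by
      conv_rhs => rw [← tsub_add_cancel_of_le hle]
      rw [Finsupp.sum_add_index (by simp) (by simp)]
      simp [Finsupp.sum_single_index]
    have hv2 : v.sum (fun _ ↦ id) = v.sum (fun _ e => e) := rfl
    have := le_totalDegree hv
    omega

lemma totalDegree_lap_le (p : MvPolynomial (Fin d) ℝ) (m : ℕ)
    (h : p.totalDegree ≤ m + 2) : (mvLaplacian p).totalDegree ≤ m := by
  refine (totalDegree_finset_sum _ _).trans (Finset.sup_le fun i _ => ?_)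
  exact totalDegree_pderiv_le _ _ _ (totalDegree_pderiv_le _ _ _ h)

lemma pderiv_eq_zero_of_deg_zero (i : Fin d) (p : MvPolynomial (Fin d) ℝ)
    (h : p.totalDegree = 0) : pderiv i p = 0 := by
  rw [MvPolynomial.totalDegree_eq_zero_iff] at h
  conv_lhs => rw [p.as_sum]
  rw [map_sum]
  refine Finset.sum_eq_zero fun v hv => ?_
  rw [pderiv_monomial, h v hv i]
  simp

lemma lap_eq_zero_of_deg_zero (p : MvPolynomial (Fin d) ℝ) (h : p.totalDegree = 0) :
    mvLaplacian p = 0 := by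
  rw [mvLaplacian]
  refine Finset.sum_eq_zero fun i _ => ?_
  rw [pderiv_eq_zero_of_deg_zero i p h]
  simp

lemma lap_iter_eq_zero (k : ℕ) (p : MvPolynomial (Fin d) ℝ) (h : p.totalDegree < k) :
    mvLaplacian^[k] p = 0 := by
  induction k generalizing p with
  | zero => omega
  | succ k ih =>
    rw [Function.iterate_succ_apply]
    rcases Nat.eq_zero_or_pos k with rfl | hk
    · simpa using lap_eq_zero_of_deg_zero p (by omega)
    · rcases Nat.eq_zero_or_pos p.totalDegree with h0 | h0
      · rw [lap_eq_zero_of_deg_zero p h0, lap_iter_zero]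
      · exact ih _ (by
          have := totalDegree_lap_le p (p.totalDegree - 2) (by omega)
          omega)

/-- Truncated heat sum. -/
noncomputable def hsum (t : ℝ) (N : ℕ) (p : MvPolynomial (Fin d) ℝ) : MvPolynomial (Fin d) ℝ :=
  ∑ k ∈ Finset.range N, ((t / 2) ^ k / (k.factorial : ℝ)) • mvLaplacian^[k] p

lemma heatOp_eq_hsum (t : ℝ) (p : MvPolynomial (Fin d) ℝ) :
    heatOp t p = hsum t (p.totalDegree + 1) p := rfl

lemma hsum_eq_heatOp (t : ℝ) (N : ℕ) (p : MvPolynomial (Fin d) ℝ)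
    (h : p.totalDegree + 1 ≤ N) : hsum t N p = heatOp t p := by
  rw [heatOp_eq_hsum, hsum, hsum]
  refine (Finset.sum_subset (Finset.range_subset_range.2 h) fun k _ hk => ?_).symm
  rw [Finset.mem_range, not_lt] at hk
  rw [lap_iter_eq_zero k p (by omega), smul_zero]

lemma hsum_add (t : ℝ) (N : ℕ) (p q : MvPolynomial (Fin d) ℝ) :
    hsum t N (p + q) = hsum t N p + hsum t N q := by
  simp [hsum, lap_iter_add, smul_add, Finset.sum_add_distrib]

lemma hsum_smul (t : ℝ) (N : ℕ) (c : ℝ) (p : MvPolynomial (Fin d) ℝ) :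
    hsum t N (c • p) = c • hsum t N p := by
  simp [hsum, lap_iter_smul, Finset.smul_sum, smul_comm c]

end HeatAux

namespace HeatAux

variable {d : ℕ}

lemma pderiv_lap (i : Fin d) (p : MvPolynomial (Fin d) ℝ) :
    pderiv i (mvLaplacian p) = mvLaplacian (pderiv i p) := by
  rw [mvLaplacian, mvLaplacian, map_sum]
  refine Finset.sum_congr rfl fun j _ => ?_
  rw [pderiv_comm i j, pderiv_comm i j]

lemma pderiv_lap_iter (i : Fin d) (k : ℕ) (p : MvPolynomial (Fin d) ℝ) :
    pderiv i (mvLaplacian^[k] p) = mvLaplacian^[k] (pderiv i p) := by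
  induction k generalizing p with
  | zero => simp
  | succ k ih => rw [Function.iterate_succ_apply, Function.iterate_succ_apply, ih, pderiv_lap]

lemma lap_X_mul (i : Fin d) (p : MvPolynomial (Fin d) ℝ) :
    mvLaplacian (X i * p) = X i * mvLaplacian p + (2 : ℝ) • pderiv i p := by
  have hterm : ∀ j : Fin d, pderiv j (pderiv j (X i * p))
      = X i * pderiv j (pderiv j p)
        + (if j = i then (2 : ℝ) • pderiv i p else 0) := by
    intro j
    rcases eq_or_ne j i with rfl | hj
    · rw [if_pos rfl, pderiv_mul, pderiv_X_self, one_mul, map_add, pderiv_mul, pderiv_X_self,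
        one_mul, two_smul]
      abel
    · rw [pderiv_mul, pderiv_X_of_ne (Ne.symm hj), zero_mul, zero_add, pderiv_mul,
        pderiv_X_of_ne (Ne.symm hj), zero_mul, zero_add, if_neg hj, add_zero]
  rw [mvLaplacian, mvLaplacian]
  rw [Finset.sum_congr rfl fun j _ => hterm j, Finset.sum_add_distrib, ← Finset.mul_sum,
    Finset.sum_ite_eq' Finset.univ i (fun _ => (2:ℝ) • pderiv i p), if_pos (Finset.mem_univ i)]

lemma lap_iter_X_mul (i : Fin d) (p : MvPolynomial (Fin d) ℝ) (k : ℕ) :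
    mvLaplacian^[k+1] (X i * p)
      = X i * mvLaplacian^[k+1] p + ((2 * (k+1) : ℕ) : ℝ) • mvLaplacian^[k] (pderiv i p) := by
  induction k generalizing p with
  | zero => simpa using lap_X_mul i p
  | succ k ih =>
    rw [Function.iterate_succ_apply, lap_X_mul, lap_iter_add, ih, lap_iter_smul]
    rw [pderiv_lap]
    rw [← Function.iterate_succ_apply, ← Function.iterate_succ_apply]
    rw [add_assoc, ← add_smul]
    congr 2
    push_cast
    ring

lemma coeff_succ_mul (t : ℝ) (k : ℕ) :
    ((t/2) ^ (k+1) / ((k+1).factorial : ℝ)) * ((2 * (k+1) : ℕ) : ℝ)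
      = t * ((t/2) ^ k / (k.factorial : ℝ)) := by
  rw [Nat.factorial_succ]
  have h1 : ((k.factorial : ℝ)) ≠ 0 := Nat.cast_ne_zero.2 k.factorial_ne_zero
  have h2 : ((k : ℝ) + 1) ≠ 0 := by positivity
  push_cast
  field_simp
  ring

lemma hsum_X_mul (t : ℝ) (N : ℕ) (i : Fin d) (p : MvPolynomial (Fin d) ℝ) :
    hsum t (N+1) (X i * p) = X i * hsum t (N+1) p + t • hsum t N (pderiv i p) := by
  rw [hsum, hsum, hsum, Finset.sum_range_succ', Finset.sum_range_succ' _ N]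
  have key : ∀ k ∈ Finset.range N,
      ((t/2) ^ (k+1) / ((k+1).factorial : ℝ)) • mvLaplacian^[k+1] (X i * p)
        = X i * (((t/2) ^ (k+1) / ((k+1).factorial : ℝ)) • mvLaplacian^[k+1] p)
          + t • (((t/2) ^ k / (k.factorial : ℝ)) • mvLaplacian^[k] (pderiv i p)) := by
    intro k _
    rw [lap_iter_X_mul, smul_add, mul_smul_comm, smul_smul, smul_smul, coeff_succ_mul]
  rw [Finset.sum_congr rfl key, Finset.sum_add_distrib, ← Finset.mul_sum, ← Finset.smul_sum]
  simp only [pow_zero, Nat.factorial_zero, Nat.cast_one, div_one, one_smul,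
    Function.iterate_zero, id_eq]
  rw [mul_add]
  abel

lemma hsum_finset_sum {ι : Type*} (t : ℝ) (N : ℕ) (s : Finset ι)
    (f : ι → MvPolynomial (Fin d) ℝ) :
    hsum t N (∑ j ∈ s, f j) = ∑ j ∈ s, hsum t N (f j) := by
  classical
  induction s using Finset.induction with
  | empty => simp [hsum, lap_iter_zero]
  | insert _ _ hj ih => rw [Finset.sum_insert hj, hsum_add, ih, Finset.sum_insert hj]

lemma eval_heatOp_eq_sum (t : ℝ) (x : Fin d → ℝ) (p : MvPolynomial (Fin d) ℝ) :
    eval x (heatOp t p)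
      = ∑ n ∈ p.support, coeff n p * eval x (heatOp t (monomial n 1)) := by
  have hps : ∀ N, hsum t N p = ∑ n ∈ p.support, hsum t N (monomial n (coeff n p)) := by
    intro N
    conv_lhs => rw [p.as_sum]
    exact hsum_finset_sum _ _ _ _
  rw [heatOp_eq_hsum, hps, map_sum]
  refine Finset.sum_congr rfl fun n hn => ?_
  have hmono : monomial n (coeff n p) = (coeff n p) • monomial n (1:ℝ) := by
    rw [smul_monomial, smul_eq_mul, mul_one]
  rw [hmono, hsum_smul, hsum_eq_heatOp]
  · rw [smul_eq_C_mul, eval_mul, eval_C]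
  · have : (monomial n (1:ℝ)).totalDegree = n.sum fun _ e => e :=
      totalDegree_monomial _ one_ne_zero
    rw [this]
    exact Nat.add_le_add_right (le_totalDegree hn) 1

lemma degree_sub_single_le (m : Fin d →₀ ℕ) (i : Fin d) :
    (m - Finsupp.single i 1).sum (fun _ e => e) ≤ m.sum (fun _ e => e) := by
  rcases Nat.eq_zero_or_pos (m i) with h0 | h0
  · have : m - Finsupp.single i 1 = m := by
      ext j
      rw [Finsupp.tsub_apply, Finsupp.single_apply]
      rcases eq_or_ne i j with rfl | hij
      · simp [h0]
      · simp [hij]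
    rw [this]
  · have hle : Finsupp.single i 1 ≤ m := by rw [Finsupp.single_le_iff]; exact h0
    have hv' : (m - Finsupp.single i 1).sum (fun _ e => e) + 1 = m.sum (fun _ e => e) := by
      conv_rhs => rw [← tsub_add_cancel_of_le hle]
      rw [Finsupp.sum_add_index (by simp) (by simp)]
      simp [Finsupp.sum_single_index]
    omega

lemma eval_heatOp_monomial_rec (t : ℝ) (x : Fin d → ℝ) (i : Fin d) (m : Fin d →₀ ℕ) :
    eval x (heatOp t (monomial (m + Finsupp.single i 1) (1:ℝ)))
      = x i * eval x (heatOp t (monomial m 1))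
        + t * (m i) * eval x (heatOp t (monomial (m - Finsupp.single i 1) (1:ℝ))) := by
  set D := m.sum (fun _ e => e) with hD
  have hdegm : (monomial m (1:ℝ)).totalDegree = D := totalDegree_monomial _ one_ne_zero
  have hX : monomial (m + Finsupp.single i 1) (1:ℝ) = X i * monomial m 1 := by
    rw [X, monomial_mul, one_mul, add_comm]
  have hdegX : (monomial (m + Finsupp.single i 1) (1:ℝ)).totalDegree = D + 1 := by
    rw [totalDegree_monomial _ one_ne_zero, Finsupp.sum_add_index (by simp) (by simp),
      Finsupp.sum_single_index (by simp)]
  have h1 : heatOp t (monomial (m + Finsupp.single i 1) (1:ℝ))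
      = hsum t (D + 1 + 1) (X i * monomial m 1) := by
    rw [← hX, hsum_eq_heatOp]
    rw [hdegX]
  rw [h1, hsum_X_mul]
  have h2 : hsum t (D + 1 + 1) (monomial m (1:ℝ)) = heatOp t (monomial m 1) :=
    hsum_eq_heatOp _ _ _ (by omega)
  have hpd : pderiv i (monomial m (1:ℝ))
      = ((m i : ℝ)) • monomial (m - Finsupp.single i 1) (1:ℝ) := by
    rw [pderiv_monomial, smul_monomial, smul_eq_mul, mul_one, one_mul]
  have h3 : hsum t (D + 1) (pderiv i (monomial m (1:ℝ)))
      = ((m i : ℝ)) • heatOp t (monomial (m - Finsupp.single i 1) (1:ℝ)) := by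
    rw [hpd, hsum_smul, hsum_eq_heatOp]
    rw [totalDegree_monomial _ one_ne_zero]
    exact Nat.add_le_add_right (degree_sub_single_le m i) 1
  rw [h2, h3]
  simp only [map_add, eval_mul, eval_X, smul_eq_C_mul, eval_C]
  ring

lemma eval_heatOp_monomial_zero (t : ℝ) (x : Fin d → ℝ) :
    eval x (heatOp t (monomial (0 : Fin d →₀ ℕ) (1:ℝ))) = 1 := by
  have h1 : monomial (0 : Fin d →₀ ℕ) (1:ℝ) = 1 := by simp [monomial_zero']
  rw [h1, heatOp, totalDegree_one]
  simp

end HeatAux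

namespace HeatAux

open Real Filter


lemma tendsto_pow_gauss {c : ℝ} (hc : 0 < c) (k : ℕ) :
    Tendsto (fun s : ℝ => s ^ k * Real.exp (-c * s ^ 2)) (Filter.cocompact ℝ) (nhds 0) := by
  rw [tendsto_zero_iff_norm_tendsto_zero]
  have h := tendsto_rpow_abs_mul_exp_neg_mul_sq_cocompact hc (k : ℝ)
  refine h.congr fun s => ?_
  rw [Real.norm_eq_abs, abs_mul, abs_pow, abs_of_pos (Real.exp_pos _),
    Real.rpow_natCast]

lemma integrable_pow_gauss {b : ℝ} (hb : 0 < b) (k : ℕ) :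
    Integrable (fun s : ℝ => s ^ k * Real.exp (-b * s ^ 2)) := by
  have hcont : Continuous fun s : ℝ => s ^ k * Real.exp (-b * s ^ 2) := by fun_prop
  have hg : Integrable (fun s : ℝ => Real.exp (-(b/2) * s ^ 2)) :=
    integrable_exp_neg_mul_sq (by positivity)
  refine (hcont.locallyIntegrable).integrable_of_isBigO_cocompact
    (g := fun s : ℝ => Real.exp (-(b/2) * s ^ 2)) ?_ (hg.integrableAtFilter _)
  refine Asymptotics.IsLittleO.isBigO ?_
  rw [Asymptotics.isLittleO_iff_tendsto' (by
    filter_upwards with s h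
    exact absurd h (Real.exp_ne_zero _))]
  refine (tendsto_pow_gauss (half_pos hb) k).congr fun s => ?_
  rw [mul_div_assoc, ← Real.exp_sub]
  congr 2
  ring

lemma integrable_pow_shift_gauss {b : ℝ} (hb : 0 < b) (m k : ℕ) (a : ℝ) :
    Integrable (fun s : ℝ => s ^ m * (a + s) ^ k * Real.exp (-b * s ^ 2)) := by
  have hexp : ∀ s : ℝ, s ^ m * (a + s) ^ k * Real.exp (-b * s ^ 2)
      = ∑ j ∈ Finset.range (k + 1),
          (a ^ j * (k.choose j : ℝ)) * (s ^ (k - j + m) * Real.exp (-b * s ^ 2)) := by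
    intro s
    rw [add_pow, Finset.mul_sum, Finset.sum_mul]
    refine Finset.sum_congr rfl fun j _ => ?_
    rw [pow_add]
    ring
  simp_rw [hexp]
  exact integrable_finset_sum _ fun j _ =>
    (integrable_pow_gauss hb (k - j + m)).const_mul _

variable {t : ℝ} (ht : 0 < t)
include ht

lemma coe_toNNReal_t : ((t.toNNReal : ℝ)) = t := Real.coe_toNNReal t ht.le


lemma toNNReal_ne_zero : t.toNNReal ≠ 0 := by
  simp [Real.toNNReal_eq_zero, not_le, ht]

/-- Convert an integral against `gaussianReal 0 t.toNNReal` to a Lebesgue integral. -/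
lemma integral_gaussianReal_eq (f : ℝ → ℝ) :
    ∫ s, f s ∂(gaussianReal 0 t.toNNReal)
      = ∫ s, gaussianPDFReal 0 t.toNNReal s * f s := by
  rw [gaussianReal_of_var_ne_zero 0 (toNNReal_ne_zero ht)]
  rw [show gaussianPDF 0 t.toNNReal
      = fun x => ((gaussianPDFReal 0 t.toNNReal x).toNNReal : ENNReal) from rfl]
  rw [integral_withDensity_eq_integral_smul
    ((measurable_gaussianPDFReal 0 t.toNNReal).real_toNNReal) f]
  refine integral_congr_ae (Filter.Eventually.of_forall fun s => ?_)
  simp only [NNReal.smul_def, smul_eq_mul]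
  rw [Real.coe_toNNReal _ (gaussianPDFReal_nonneg 0 _ s)]

lemma integrable_gaussianReal_iff (f : ℝ → ℝ) :
    Integrable f (gaussianReal 0 t.toNNReal)
      ↔ Integrable (fun s => gaussianPDFReal 0 t.toNNReal s * f s) := by
  rw [gaussianReal_of_var_ne_zero 0 (toNNReal_ne_zero ht)]
  rw [show gaussianPDF 0 t.toNNReal
      = fun x => ((gaussianPDFReal 0 t.toNNReal x).toNNReal : ENNReal) from rfl]
  rw [integrable_withDensity_iff_integrable_smul
    ((measurable_gaussianPDFReal 0 t.toNNReal).real_toNNReal)]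
  refine integrable_congr (Filter.Eventually.of_forall fun s => ?_)
  simp only [NNReal.smul_def, smul_eq_mul]
  rw [Real.coe_toNNReal _ (gaussianPDFReal_nonneg 0 _ s)]

lemma gaussianPDFReal_eq (s : ℝ) :
    gaussianPDFReal 0 t.toNNReal s
      = (Real.sqrt (2 * Real.pi * t))⁻¹ * Real.exp (-(1/(2*t)) * s ^ 2) := by
  rw [gaussianPDFReal, Real.coe_toNNReal t ht.le, sub_zero]
  congr 1
  ring

lemma integrable_pow_shift_gaussianReal (m k : ℕ) (a : ℝ) :
    Integrable (fun s : ℝ => s ^ m * (a + s) ^ k) (gaussianReal 0 t.toNNReal) := by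
  rw [integrable_gaussianReal_iff ht]
  have : ∀ s : ℝ, gaussianPDFReal 0 t.toNNReal s * (s ^ m * (a + s) ^ k)
      = (Real.sqrt (2 * Real.pi * t))⁻¹
          * (s ^ m * (a + s) ^ k * Real.exp (-(1/(2*t)) * s ^ 2)) := by
    intro s
    rw [gaussianPDFReal_eq ht]
    ring
  simp_rw [this]
  exact (integrable_pow_shift_gauss (by positivity) m k a).const_mul _

end HeatAux

namespace HeatAux

variable {t : ℝ} (ht : 0 < t)

lemma integrable_shift_gauss {b : ℝ} (hb : 0 < b) (k : ℕ) (a : ℝ) :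
    Integrable (fun s : ℝ => (a + s) ^ k * Real.exp (-b * s ^ 2)) := by
  have := integrable_pow_shift_gauss hb 0 k a
  simpa using this

lemma integrable_mul_shift_gauss {b : ℝ} (hb : 0 < b) (k : ℕ) (a : ℝ) :
    Integrable (fun s : ℝ => s * (a + s) ^ k * Real.exp (-b * s ^ 2)) := by
  have := integrable_pow_shift_gauss hb 1 k a
  simpa using this

include ht

lemma gauss_ibp (a : ℝ) (n : ℕ) :
    ∫ s : ℝ, s * (a + s) ^ n * Real.exp (-(1/(2*t)) * s ^ 2)
      = t * n * ∫ s : ℝ, (a + s) ^ (n-1) * Real.exp (-(1/(2*t)) * s ^ 2) := by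
  have hb : (0:ℝ) < 1/(2*t) := by positivity
  set b : ℝ := 1/(2*t) with hbdef
  have hder : ∀ s : ℝ, HasDerivAt (fun s : ℝ => (a+s)^n * Real.exp (-b * s^2))
      (((n:ℝ) * (a+s)^(n-1) * 1) * Real.exp (-b*s^2)
        + (a+s)^n * (Real.exp (-b*s^2) * (-b * (2*s)))) s := by
    intro s
    have h1 : HasDerivAt (fun s : ℝ => a + s) 1 s := (hasDerivAt_id s).const_add a
    have h2 : HasDerivAt (fun s : ℝ => (a+s)^n) ((n:ℝ) * (a+s)^(n-1) * 1) s := h1.pow n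
    have h3 : HasDerivAt (fun s : ℝ => -b * s^2) (-b * (2*s)) s := by
      have := (hasDerivAt_pow 2 s).const_mul (-b)
      simpa [pow_one] using this
    exact h2.mul h3.exp
  have hA : Integrable (fun s : ℝ =>
      ((n:ℝ) * (a+s)^(n-1) * 1) * Real.exp (-b*s^2)) := by
    have h := (integrable_shift_gauss hb (n-1) a).const_mul (n:ℝ)
    refine h.congr (Filter.Eventually.of_forall fun s => ?_)
    ring
  have hB : Integrable (fun s : ℝ =>
      (a+s)^n * (Real.exp (-b*s^2) * (-b * (2*s)))) := by
    have h := (integrable_mul_shift_gauss hb n a).const_mul (-2*b)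
    refine h.congr (Filter.Eventually.of_forall fun s => ?_)
    ring
  have hF : Integrable (fun s : ℝ => (a+s)^n * Real.exp (-b*s^2)) :=
    integrable_shift_gauss hb n a
  have hzero := integral_eq_zero_of_hasDerivAt_of_integrable hder (hA.add hB) hF
  rw [integral_add hA hB] at hzero
  have e1 : ∫ s : ℝ, ((n:ℝ) * (a+s)^(n-1) * 1) * Real.exp (-b*s^2)
      = (n:ℝ) * ∫ s : ℝ, (a+s)^(n-1) * Real.exp (-b*s^2) := by
    rw [← integral_const_mul]
    refine integral_congr_ae (Filter.Eventually.of_forall fun s => ?_)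
    ring
  have e2 : ∫ s : ℝ, (a+s)^n * (Real.exp (-b*s^2) * (-b * (2*s)))
      = (-2*b) * ∫ s : ℝ, s * (a+s)^n * Real.exp (-b*s^2) := by
    rw [← integral_const_mul]
    refine integral_congr_ae (Filter.Eventually.of_forall fun s => ?_)
    ring
  rw [e1, e2] at hzero
  set I1 := ∫ s : ℝ, (a+s)^(n-1) * Real.exp (-b*s^2) with hI1
  set I2 := ∫ s : ℝ, s * (a+s)^n * Real.exp (-b*s^2) with hI2
  have h5 : (n:ℝ) * I1 = 2*b*I2 := by linarith
  have h8 : t * (2*b) = 1 := by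
    rw [hbdef]
    field_simp
  calc I2 = t * (2*b) * I2 := by rw [h8, one_mul]
    _ = t * (2*b*I2) := by ring
    _ = t * ((n:ℝ) * I1) := by rw [h5]
    _ = t * (n:ℝ) * I1 := by ring

end HeatAux

namespace HeatAux

variable {t : ℝ} (ht : 0 < t)
include ht

lemma integrable_shift_pow_gaussianReal (k : ℕ) (a : ℝ) :
    Integrable (fun s : ℝ => (a + s) ^ k) (gaussianReal 0 t.toNNReal) := by
  have := integrable_pow_shift_gaussianReal ht 0 k a
  simpa using this

lemma integrable_mul_shift_pow_gaussianReal (k : ℕ) (a : ℝ) :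
    Integrable (fun s : ℝ => s * (a + s) ^ k) (gaussianReal 0 t.toNNReal) := by
  have := integrable_pow_shift_gaussianReal ht 1 k a
  simpa using this

lemma gauss_moment_rec (a : ℝ) (n : ℕ) :
    ∫ s, s * (a + s) ^ n ∂(gaussianReal 0 t.toNNReal)
      = t * n * ∫ s, (a + s) ^ (n-1) ∂(gaussianReal 0 t.toNNReal) := by
  rw [integral_gaussianReal_eq ht, integral_gaussianReal_eq ht]
  have h1 : ∀ s : ℝ, gaussianPDFReal 0 t.toNNReal s * (s * (a + s) ^ n)
      = (Real.sqrt (2 * Real.pi * t))⁻¹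
          * (s * (a + s) ^ n * Real.exp (-(1/(2*t)) * s ^ 2)) := by
    intro s
    rw [gaussianPDFReal_eq ht]
    ring
  have h2 : ∀ s : ℝ, gaussianPDFReal 0 t.toNNReal s * ((a + s) ^ (n-1))
      = (Real.sqrt (2 * Real.pi * t))⁻¹
          * ((a + s) ^ (n-1) * Real.exp (-(1/(2*t)) * s ^ 2)) := by
    intro s
    rw [gaussianPDFReal_eq ht]
    ring
  simp_rw [h1, h2]
  rw [integral_const_mul, integral_const_mul, gauss_ibp ht]
  ring

lemma gauss_rec (a : ℝ) (n : ℕ) :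
    ∫ s, (a + s) ^ (n+1) ∂(gaussianReal 0 t.toNNReal)
      = a * ∫ s, (a + s) ^ n ∂(gaussianReal 0 t.toNNReal)
        + t * n * ∫ s, (a + s) ^ (n-1) ∂(gaussianReal 0 t.toNNReal) := by
  have hsplit : ∀ s : ℝ, (a + s) ^ (n+1) = a * (a + s) ^ n + s * (a + s) ^ n := by
    intro s
    ring
  simp_rw [hsplit]
  rw [integral_add ((integrable_shift_pow_gaussianReal ht n a).const_mul a)
    (integrable_mul_shift_pow_gaussianReal ht n a), integral_const_mul,
    gauss_moment_rec ht]

omit ht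

lemma gauss_base (a : ℝ) :
    ∫ s, (a + s) ^ 0 ∂(gaussianReal 0 t.toNNReal) = 1 := by
  simp

end HeatAux


namespace HeatAux

open MeasureTheory

lemma integral_pi_prod {d : ℕ} (μ : Measure ℝ) [IsProbabilityMeasure μ]
    (f : Fin d → ℝ → ℝ) :
    ∫ y : Fin d → ℝ, ∏ i, f i (y i) ∂(Measure.pi fun _ => μ) = ∏ i, ∫ s, f i s ∂μ := by
  letI : MeasureSpace ℝ := ⟨μ⟩
  haveI : SigmaFinite (volume : Measure ℝ) := by
    change SigmaFinite μ
    infer_instance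
  exact MeasureTheory.integral_fintype_prod_eq_prod (fun i => f i)

lemma integrable_pi_prod {d : ℕ} (μ : Measure ℝ) [IsProbabilityMeasure μ]
    (f : Fin d → ℝ → ℝ) (hf : ∀ i, Integrable (f i) μ) :
    Integrable (fun y : Fin d → ℝ => ∏ i, f i (y i)) (Measure.pi fun _ => μ) := by
  letI : MeasureSpace ℝ := ⟨μ⟩
  haveI : SigmaFinite (volume : Measure ℝ) := by
    change SigmaFinite μ
    infer_instance
  exact MeasureTheory.Integrable.fintype_prod (f := f) hf

lemma main_monomial {d : ℕ} {t : ℝ} (ht : 0 < t) (x : Fin d → ℝ) :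
    ∀ (K : ℕ) (m : Fin d →₀ ℕ), (m.sum fun _ e => e) ≤ K →
      (∏ i, ∫ s, (x i + s) ^ (m i) ∂(gaussianReal 0 t.toNNReal))
        = MvPolynomial.eval x (heatOp t (MvPolynomial.monomial m 1)) := by
  intro K
  induction K with
  | zero =>
    intro m hm
    have hm0 : m = 0 := by
      ext i
      rcases Nat.eq_zero_or_pos (m i) with h0 | h0
      · simp [h0]
      · exfalso
        have hi : i ∈ m.support := Finsupp.mem_support_iff.2 h0.ne'
        have : 1 ≤ m.sum fun _ e => e := by
          refine le_trans h0 ?_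
          exact Finset.single_le_sum (fun j _ => Nat.zero_le _) hi
        omega
    subst hm0
    rw [eval_heatOp_monomial_zero]
    refine Finset.prod_eq_one fun i _ => ?_
    simpa using gauss_base (t := t) (x i)
  | succ K ih =>
    intro m hm
    rcases eq_or_ne m 0 with rfl | hm0
    · rw [eval_heatOp_monomial_zero]
      refine Finset.prod_eq_one fun i _ => ?_
      simpa using gauss_base (t := t) (x i)
    · obtain ⟨i, hi⟩ := Finsupp.support_nonempty_iff.2 hm0
      have hmi : 1 ≤ m i := Nat.one_le_iff_ne_zero.2 (Finsupp.mem_support_iff.1 hi)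
      set m' : Fin d →₀ ℕ := m - Finsupp.single i 1 with hm'def
      have hle : Finsupp.single i 1 ≤ m := by
        rw [Finsupp.single_le_iff]
        exact hmi
      have hm'add : m' + Finsupp.single i 1 = m := tsub_add_cancel_of_le hle
      have hm'j : ∀ j, j ≠ i → m' j = m j := by
        intro j hj
        rw [hm'def, Finsupp.tsub_apply, Finsupp.single_apply, if_neg (Ne.symm hj), Nat.sub_zero]
      have hm'i : m' i = m i - 1 := by
        rw [hm'def, Finsupp.tsub_apply, Finsupp.single_apply, if_pos rfl]
      have hdegm : (m'.sum fun _ e => e) + 1 = m.sum fun _ e => e := by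
        conv_rhs => rw [← hm'add]
        rw [Finsupp.sum_add_index (by simp) (by simp)]
        simp [Finsupp.sum_single_index]
      have hdegm' : (m'.sum fun _ e => e) ≤ K := by omega
      have hdegm'' : ((m' - Finsupp.single i 1).sum fun _ e => e) ≤ K :=
        le_trans (degree_sub_single_le m' i) hdegm'
      set m'' : Fin d →₀ ℕ := m' - Finsupp.single i 1 with hm''def
      have hm''j : ∀ j, j ≠ i → m'' j = m j := by
        intro j hj
        rw [hm''def, Finsupp.tsub_apply, Finsupp.single_apply, if_neg (Ne.symm hj),
          Nat.sub_zero, hm'j j hj]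
      have hm''i : m'' i = m' i - 1 := by
        rw [hm''def, Finsupp.tsub_apply, Finsupp.single_apply, if_pos rfl]
      have hprod : ∀ (n : Fin d →₀ ℕ), (∀ j, j ≠ i → n j = m j) →
          (∏ j, ∫ s, (x j + s) ^ (n j) ∂(gaussianReal 0 t.toNNReal))
            = (∫ s, (x i + s) ^ (n i) ∂(gaussianReal 0 t.toNNReal))
              * ∏ j ∈ Finset.univ.erase i, ∫ s, (x j + s) ^ (m j) ∂(gaussianReal 0 t.toNNReal) := by
        intro n hn
        rw [← Finset.mul_prod_erase Finset.univ _ (Finset.mem_univ i)]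
        congr 1
        exact Finset.prod_congr rfl fun j hj => by rw [hn j (Finset.ne_of_mem_erase hj)]
      have hrec := gauss_rec ht (x i) (m' i)
      have hmieq : m i = m' i + 1 := by omega
      calc (∏ j, ∫ s, (x j + s) ^ (m j) ∂(gaussianReal 0 t.toNNReal))
          = (∫ s, (x i + s) ^ (m' i + 1) ∂(gaussianReal 0 t.toNNReal))
              * ∏ j ∈ Finset.univ.erase i, ∫ s, (x j + s) ^ (m j)
                  ∂(gaussianReal 0 t.toNNReal) := by
            rw [← hmieq]
            exact hprod m (fun _ _ => rfl)
        _ = x i * ((∫ s, (x i + s) ^ (m' i) ∂(gaussianReal 0 t.toNNReal))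
              * ∏ j ∈ Finset.univ.erase i, ∫ s, (x j + s) ^ (m j)
                  ∂(gaussianReal 0 t.toNNReal))
            + t * (m' i) * ((∫ s, (x i + s) ^ (m' i - 1) ∂(gaussianReal 0 t.toNNReal))
              * ∏ j ∈ Finset.univ.erase i, ∫ s, (x j + s) ^ (m j)
                  ∂(gaussianReal 0 t.toNNReal)) := by
            rw [hrec]
            ring
        _ = x i * (∏ j, ∫ s, (x j + s) ^ (m' j) ∂(gaussianReal 0 t.toNNReal))
            + t * (m' i) * (∏ j, ∫ s, (x j + s) ^ (m'' j) ∂(gaussianReal 0 t.toNNReal)) := by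
            rw [hprod m' hm'j, hprod m'' hm''j, hm''i]
        _ = x i * MvPolynomial.eval x (heatOp t (MvPolynomial.monomial m' 1))
            + t * (m' i) * MvPolynomial.eval x (heatOp t (MvPolynomial.monomial m'' 1)) := by
            rw [ih m' hdegm', ih m'' hdegm'']
        _ = MvPolynomial.eval x (heatOp t (MvPolynomial.monomial m 1)) := by
            rw [← hm'add]
            exact (eval_heatOp_monomial_rec t x i m').symm

end HeatAux

/-- The algebraically defined heat operator agrees with Gaussian convolution on
polynomials: `∫ p(x+y) dγ_t^d(y) = (e^{tΔ/2} p)(x)`. -/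
theorem heatOp_eq_gaussian_convolution
    (d : ℕ) (t : ℝ) (ht : 0 < t) (p : MvPolynomial (Fin d) ℝ) (x : Fin d → ℝ) :
    ∫ y, MvPolynomial.eval (x + y) p ∂(gaussianPi d t) =
      MvPolynomial.eval x (heatOp t p) := by
  classical
  have heval : ∀ y : Fin d → ℝ, MvPolynomial.eval (x + y) p
      = ∑ n ∈ p.support, coeff n p * ∏ i, (x i + y i) ^ (n i) := by
    intro y
    rw [MvPolynomial.eval_eq']
    rfl
  have hint : ∀ n : Fin d →₀ ℕ,
      Integrable (fun y : Fin d → ℝ => ∏ i, (x i + y i) ^ (n i)) (gaussianPi d t) :=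
    fun n => HeatAux.integrable_pi_prod _ _
      (fun i => HeatAux.integrable_shift_pow_gaussianReal ht (n i) (x i))
  calc ∫ y, MvPolynomial.eval (x + y) p ∂(gaussianPi d t)
      = ∫ y, ∑ n ∈ p.support, coeff n p * ∏ i, (x i + y i) ^ (n i) ∂(gaussianPi d t) := by
        refine integral_congr_ae (Filter.Eventually.of_forall fun y => ?_)
        exact heval y
    _ = ∑ n ∈ p.support, ∫ y, coeff n p * ∏ i, (x i + y i) ^ (n i) ∂(gaussianPi d t) :=
        integral_finset_sum _ (fun n _ => (hint n).const_mul _)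
    _ = ∑ n ∈ p.support, coeff n p
          * ∏ i, ∫ s, (x i + s) ^ (n i) ∂(gaussianReal 0 t.toNNReal) := by
        refine Finset.sum_congr rfl fun n _ => ?_
        rw [integral_const_mul]
        congr 1
        exact HeatAux.integral_pi_prod (gaussianReal 0 t.toNNReal)
          (fun i s => (x i + s) ^ (n i))
    _ = ∑ n ∈ p.support, coeff n p
          * MvPolynomial.eval x (heatOp t (MvPolynomial.monomial n 1)) := by
        refine Finset.sum_congr rfl fun n _ => ?_
        rw [HeatAux.main_monomial ht x _ n le_rfl]
    _ = MvPolynomial.eval x (heatOp t p) := (HeatAux.eval_heatOp_eq_sum t x p).symm
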